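/- arXiv:1812.01838 — 3 statements merged into one kernel-verified Lean document; each statement's English description precedes it below -/
import Mathlib

section
/- Let h : ℝ → ℝ be a C¹ function with h' ≥ 0, and define H(t) = ∫₀ᵗ √(h'(τ)) dτ. Then for all a, b ∈ ℝ, (H(a) - H(b))² ≤ (a - b) * (h(a) - h(b)). -/
open MeasureTheory intervalIntegral

lemma key_cs (f : ℝ → ℝ) (hf : Continuous f) (hf0 : ∀ x, 0 ≤ f x) (b a : ℝ) (hba : b ≤ a) :
    (∫ x in b..a, Real.sqrt (f x)) ^ 2 ≤ (a - b) * ∫ x in b..a, f x := by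
  set μ := volume.restrict (Set.Ioc b a) with hμ
  have hfin : IsFiniteMeasure μ := by
    constructor
    rw [hμ, Measure.restrict_apply_univ]
    exact measure_Ioc_lt_top
  -- bound on Icc
  obtain ⟨C, hC⟩ := (isCompact_Icc (a := b) (b := a)).exists_bound_of_continuousOn
    (hf.continuousOn (s := Set.Icc b a))
  have hCs : ∀ x ∈ Set.Icc b a, ‖Real.sqrt (f x)‖ ≤ Real.sqrt C := by
    intro x hx
    rw [Real.norm_of_nonneg (Real.sqrt_nonneg _)]
    exact Real.sqrt_le_sqrt ((le_abs_self _).trans ((Real.norm_eq_abs _) ▸ hC x hx))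
  have hmemf : MemLp (fun x => Real.sqrt (f x)) (ENNReal.ofReal 2) μ := by
    refine MemLp.of_bound ((hf.sqrt).aestronglyMeasurable) (Real.sqrt C) ?_
    rw [hμ, ae_restrict_iff' measurableSet_Ioc]
    exact Filter.Eventually.of_forall fun x hx => hCs x (Set.Ioc_subset_Icc_self hx)
  have hmemg : MemLp (fun _ : ℝ => (1 : ℝ)) (ENNReal.ofReal 2) μ := by
    refine MemLp.of_bound aestronglyMeasurable_const 1 ?_
    exact Filter.Eventually.of_forall fun x => by simp
  have hpq : Real.HolderConjugate 2 2 := by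
    constructor <;> norm_num
  have h := integral_mul_le_Lp_mul_Lq_of_nonneg (μ := μ) hpq
    (Filter.Eventually.of_forall fun x => Real.sqrt_nonneg _)
    (Filter.Eventually.of_forall fun x => zero_le_one) hmemf hmemg
  simp only [mul_one, one_pow] at h
  have hsq : ∀ x, Real.sqrt (f x) ^ (2 : ℝ) = f x := by
    intro x
    rw [show (2:ℝ) = ((2:ℕ):ℝ) by norm_num, Real.rpow_natCast, Real.sq_sqrt (hf0 x)]
  simp only [hsq, Real.one_rpow] at h
  have hμu : ∫ _, (1 : ℝ) ∂μ = a - b := by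
    rw [MeasureTheory.integral_const, smul_eq_mul, mul_one, hμ, measureReal_def, Measure.restrict_apply_univ,
      Real.volume_Ioc, ENNReal.toReal_ofReal (sub_nonneg.mpr hba)]
  rw [hμu] at h
  have hI1 : ∫ x in b..a, Real.sqrt (f x) = ∫ x, Real.sqrt (f x) ∂μ := by
    rw [intervalIntegral.integral_of_le hba]
  have hI2 : ∫ x in b..a, f x = ∫ x, f x ∂μ := by
    rw [intervalIntegral.integral_of_le hba]
  rw [hI1, hI2]
  have h1 : (0:ℝ) ≤ ∫ x, Real.sqrt (f x) ∂μ :=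
    integral_nonneg fun x => Real.sqrt_nonneg _
  have h2 : (0:ℝ) ≤ ∫ x, f x ∂μ := integral_nonneg fun x => hf0 x
  calc (∫ x, Real.sqrt (f x) ∂μ) ^ 2
      ≤ ((∫ x, f x ∂μ) ^ (1/(2:ℝ)) * (a - b) ^ (1/(2:ℝ))) ^ 2 := by
        apply pow_le_pow_left₀ h1 h
    _ = (a - b) * ∫ x, f x ∂μ := by
        rw [mul_pow, ← Real.rpow_natCast ((∫ x, f x ∂μ) ^ (1/(2:ℝ))) 2,
          ← Real.rpow_natCast ((a - b) ^ (1/(2:ℝ))) 2,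
          ← Real.rpow_mul h2, ← Real.rpow_mul (sub_nonneg.mpr hba)]
        norm_num [mul_comm]

lemma key_main (h h' : ℝ → ℝ) (hderiv : ∀ x, HasDerivAt h (h' x) x)
    (hcont : Continuous h') (hpos : ∀ x, 0 ≤ h' x)
    (H : ℝ → ℝ) (hH : ∀ t, H t = ∫ τ in (0:ℝ)..t, Real.sqrt (h' τ))
    (a b : ℝ) (hba : b ≤ a) :
    (H a - H b) ^ 2 ≤ (a - b) * (h a - h b) := by
  have hsqrtc : Continuous fun τ => Real.sqrt (h' τ) := hcont.sqrt
  have hHab : H a - H b = ∫ τ in b..a, Real.sqrt (h' τ) := by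
    rw [hH a, hH b]
    rw [← intervalIntegral.integral_interval_sub_left
      (hsqrtc.intervalIntegrable 0 a) (hsqrtc.intervalIntegrable 0 b)]
  have hhab : h a - h b = ∫ τ in b..a, h' τ := by
    rw [intervalIntegral.integral_eq_sub_of_hasDerivAt (fun x _ => hderiv x)
      (hcont.intervalIntegrable b a)]
  rw [hHab, hhab]
  exact key_cs h' hcont hpos b a hba

theorem stmt_1 (h h' : ℝ → ℝ) (hderiv : ∀ x, HasDerivAt h (h' x) x)
    (hcont : Continuous h') (hpos : ∀ x, 0 ≤ h' x)
    (H : ℝ → ℝ) (hH : ∀ t, H t = ∫ τ in (0:ℝ)..t, Real.sqrt (h' τ))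
    (a b : ℝ) :
    (H a - H b) ^ 2 ≤ (a - b) * (h a - h b) := by
  rcases le_total b a with hba | hab
  · exact key_main h h' hderiv hcont hpos H hH a b hba
  · have := key_main h h' hderiv hcont hpos H hH b a hab
    calc (H a - H b) ^ 2 = (H b - H a) ^ 2 := by ring
      _ ≤ (b - a) * (h b - h a) := this
      _ = (a - b) * (h a - h b) := by ring
end

section
/- Let X_k be a finite-dimensional subspace of a normed space X₀ continuously embedded in L²(Ω) for a finite-measure set Ω, and let l > 0. Then there exists R > 0 such that for all u ∈ X_k with ‖u‖ ≤ R, one has (1/2)∫_Ω |u|² dx ≥ ∫_{{|u| > l}} |u|² dx. -/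
set_option maxHeartbeats 1000000
set_option synthInstance.maxHeartbeats 1000000

open MeasureTheory

private lemma sq_int_add' {α : Type*} [MeasurableSpace α] {μ : Measure α} {f g : α → ℝ}
    (hf : Measurable f) (hg : Measurable g)
    (hif : Integrable (fun x => f x ^ 2) μ) (hig : Integrable (fun x => g x ^ 2) μ) :
    Integrable (fun x => (f x + g x) ^ 2) μ := by
  refine Integrable.mono' (((hif.add hig).const_mul 2)) ?_ ?_
  · exact ((hf.add hg).pow_const 2).aestronglyMeasurable
  · filter_upwards with x
    simp only [Pi.add_apply]
    rw [Real.norm_eq_abs, abs_of_nonneg (sq_nonneg _)]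
    nlinarith [sq_nonneg (f x - g x)]

private lemma tail_vanish' {α : Type*} [MeasurableSpace α] (μ : Measure α)
    {g : α → ℝ} (hg : Measurable g) (hint : Integrable (fun x => g x ^ 2) μ)
    {ε : ℝ} (hε : 0 < ε) :
    ∃ N : ℝ, 0 < N ∧ (∫ x in {x | N < g x}, g x ^ 2 ∂μ) ≤ ε := by
  have hms : ∀ n : ℕ, MeasurableSet {x | (n : ℝ) < g x} := fun n =>
    measurableSet_lt measurable_const hg
  have heq : ∀ n : ℕ, (∫ x in {x | (n : ℝ) < g x}, g x ^ 2 ∂μ)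
      = ∫ x, Set.indicator {x | (n : ℝ) < g x} (fun y => g y ^ 2) x ∂μ := fun n =>
    (integral_indicator (hms n)).symm
  have htend : Filter.Tendsto (fun n : ℕ => ∫ x in {x | (n : ℝ) < g x}, g x ^ 2 ∂μ)
      Filter.atTop (nhds 0) := by
    have h0 : (0 : ℝ) = ∫ _x, (0 : ℝ) ∂μ := by simp
    rw [h0]
    simp only [heq]
    refine tendsto_integral_of_dominated_convergence (fun x => g x ^ 2)
      (fun n => ((hg.pow_const 2).indicator (hms n)).aestronglyMeasurable)
      hint (fun n => ?_) ?_
    · filter_upwards with x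
      by_cases hx : x ∈ {x | (n : ℝ) < g x}
      · rw [Set.indicator_of_mem hx, Real.norm_eq_abs, abs_of_nonneg (sq_nonneg _)]
      · rw [Set.indicator_of_notMem hx]; simpa using sq_nonneg (g x)
    · filter_upwards with x
      obtain ⟨n₀, hn₀⟩ := exists_nat_ge (g x)
      apply Filter.Tendsto.congr' (f₁ := fun _ : ℕ => (0 : ℝ))
      · filter_upwards [Filter.eventually_ge_atTop n₀] with n hn
        have : x ∉ {x | (n : ℝ) < g x} := by
          simp only [Set.mem_setOf_eq, not_lt]
          exact hn₀.trans (by exact_mod_cast hn)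
        rw [Set.indicator_of_notMem this]
      · exact tendsto_const_nhds
  have := (htend.eventually_lt_const hε).and (Filter.eventually_ge_atTop 1)
  obtain ⟨n, hn1, hn2⟩ := this.exists
  exact ⟨(n : ℝ), by exact_mod_cast hn2, le_of_lt hn1⟩

theorem stmt_10 {α : Type*} [MeasurableSpace α] (μ : Measure α) [IsFiniteMeasure μ]
    {X₀ : Type*} [NormedAddCommGroup X₀] [NormedSpace ℝ X₀]
    (ι : X₀ →ₗ[ℝ] α → ℝ) (hmeas : ∀ u, Measurable (ι u))
    (C : ℝ) (hC : 0 ≤ C) (hembed : ∀ u : X₀, (∫ x, |ι u x| ^ 2 ∂μ) ≤ C * ‖u‖ ^ 2)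
    (K : Submodule ℝ X₀) [FiniteDimensional ℝ K]
    (l : ℝ) (hl : 0 < l) :
    ∃ R : ℝ, 0 < R ∧ ∀ u ∈ K, ‖u‖ ≤ R →
      (∫ x in {x | l < |ι u x|}, |ι u x| ^ 2 ∂μ) ≤ (1 / 2) * ∫ x, |ι u x| ^ 2 ∂μ := by
  classical
  -- the submodule of square-integrable elements of K
  let V : Submodule ℝ X₀ :=
    { carrier := {v : X₀ | v ∈ K ∧ Integrable (fun x => (ι v x) ^ 2) μ}
      add_mem' := by
        intro a b ha hb
        refine ⟨K.add_mem ha.1 hb.1, ?_⟩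
        simp only [map_add, Pi.add_apply]
        exact sq_int_add' (hmeas _) (hmeas _) ha.2 hb.2
      zero_mem' := by
        refine ⟨K.zero_mem, ?_⟩
        simp only [map_zero, Pi.zero_apply]
        simpa using (integrable_const (0 : ℝ))
      smul_mem' := by
        intro c v hv
        refine ⟨K.smul_mem c hv.1, ?_⟩
        have : (fun x => (ι (c • v) x) ^ 2)
            = fun x => c ^ 2 * (ι v x) ^ 2 := by
          funext x
          simp only [LinearMap.map_smul, Pi.smul_apply, smul_eq_mul]
          ring
        rw [this]
        exact hv.2.const_mul _ }
  haveI : FiniteDimensional ℝ V :=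
    Submodule.finiteDimensional_of_le (fun v hv => hv.1)
  -- the linear map V → (α → ℝ)
  let JV : V →ₗ[ℝ] α → ℝ := ι ∘ₗ V.subtype
  have hJVmeas : ∀ v : V, Measurable (JV v) := fun v => hmeas _
  have hJVint : ∀ v : V, Integrable (fun x => JV v x ^ 2) μ := fun v => v.2.2
  -- submodule of a.e.-zero elements
  let N : Submodule ℝ V :=
    { carrier := {v : V | JV v =ᵐ[μ] 0}
      add_mem' := by
        intro a b ha hb
        show JV (a + b) =ᵐ[μ] 0
        rw [map_add]
        filter_upwards [ha, hb] with x hxa hxb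
        simp only [Pi.add_apply, hxa, hxb, Pi.zero_apply, add_zero]
      zero_mem' := by
        show JV 0 =ᵐ[μ] 0
        rw [map_zero]
      smul_mem' := by
        intro c v hv
        show JV (c • v) =ᵐ[μ] 0
        rw [LinearMap.map_smul]
        filter_upwards [hv] with x hx
        simp only [Pi.smul_apply, smul_eq_mul, hx, Pi.zero_apply, mul_zero] }
  obtain ⟨W, hWc⟩ := Submodule.exists_isCompl N
  -- the projection onto W along N
  let proj : V →ₗ[ℝ] W := W.linearProjOfIsCompl N hWc.symm
  let nmap : V →ₗ[ℝ] N := N.linearProjOfIsCompl W hWc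
  have hdecomp : ∀ v : V, ((nmap v : V) + (proj v : V)) = v := fun v =>
    Submodule.projection_add_projection_eq_self hWc v
  obtain ⟨Cp, hCppos, hprojbound⟩ :
      ∃ Cp : ℝ, 0 < Cp ∧ ∀ v : V, ‖(proj v : V)‖ ≤ Cp * ‖v‖ := by
    let projC : V →L[ℝ] W := { toLinearMap := proj, cont := proj.continuous_of_finiteDimensional }
    refine ⟨‖projC‖ + 1, by positivity, ?_⟩
    intro v
    have h1 : ‖proj v‖ ≤ ‖projC‖ * ‖v‖ := projC.le_opNorm v
    have h2 : ‖(proj v : V)‖ = ‖proj v‖ := rfl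
    nlinarith [norm_nonneg v]
  -- a dominating function g
  obtain ⟨g, hgmeas, hgnonneg, hgint, hpt⟩ :
      ∃ g : α → ℝ, Measurable g ∧ (∀ x, 0 ≤ g x) ∧ Integrable (fun x => g x ^ 2) μ ∧
        ∀ (v : V) (x : α), |JV v x| ≤ ‖v‖ * g x := by
    let b := Module.finBasis ℝ V
    let coordC : Fin (Module.finrank ℝ V) → (V →L[ℝ] ℝ) :=
      fun i => { toLinearMap := b.coord i, cont := (b.coord i).continuous_of_finiteDimensional }
    let ci : Fin (Module.finrank ℝ V) → ℝ := fun i => ‖coordC i‖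
    have hci0 : ∀ i, 0 ≤ ci i := fun i => norm_nonneg (coordC i)
    have hcoord : ∀ i, ∀ v : V, |b.repr v i| ≤ ci i * ‖v‖ := by
      intro i v
      have h := (coordC i).le_opNorm v
      have hcc : coordC i v = b.repr v i := by
        show b.coord i v = b.repr v i
        rw [Module.Basis.coord_apply]
      rwa [hcc, Real.norm_eq_abs] at h
    refine ⟨fun x => ∑ i, ci i * |JV (b i) x|, ?_, ?_, ?_, ?_⟩
    · apply Finset.measurable_sum
      intro i _
      exact measurable_const.mul (hJVmeas (b i)).abs
    · intro x
      exact Finset.sum_nonneg fun i _ => mul_nonneg (hci0 i) (abs_nonneg _)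
    · have hkey : (fun h : α → ℝ => Measurable h ∧ Integrable (fun x => h x ^ 2) μ)
          (∑ i, (fun x => ci i * |JV (b i) x|)) := by
        refine Finset.sum_induction _
          (fun h : α → ℝ => Measurable h ∧ Integrable (fun x => h x ^ 2) μ) ?_ ?_ ?_
        · intro f1 f2 h1 h2
          refine ⟨h1.1.add h2.1, ?_⟩
          have := sq_int_add' h1.1 h2.1 h1.2 h2.2
          simpa [Pi.add_apply] using this
        · exact ⟨measurable_const, by simpa using (integrable_const (0 : ℝ))⟩
        · intro i _
          refine ⟨measurable_const.mul (hJVmeas (b i)).abs, ?_⟩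
          have : (fun x => (ci i * |JV (b i) x|) ^ 2)
              = fun x => (ci i) ^ 2 * (JV (b i) x) ^ 2 := by
            funext x; rw [mul_pow, sq_abs]
          rw [this]
          exact (hJVint (b i)).const_mul _
      have hfun : (fun x => ∑ i, ci i * |JV (b i) x|)
          = ∑ i, (fun x => ci i * |JV (b i) x|) := by
        funext x
        rw [Finset.sum_apply]
      rw [hfun]
      exact hkey.2
    · intro v x
      have hv : JV v = ∑ i, b.repr v i • JV (b i) := by
        conv_lhs => rw [← b.sum_repr v]
        rw [map_sum]
        simp only [LinearMap.map_smul]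
      have hvx : JV v x = ∑ i, b.repr v i * JV (b i) x := by
        rw [hv, Finset.sum_apply]
        simp only [Pi.smul_apply, smul_eq_mul]
      rw [hvx]
      calc |∑ i, b.repr v i * JV (b i) x| ≤ ∑ i, |b.repr v i * JV (b i) x| :=
            Finset.abs_sum_le_sum_abs _ _
        _ ≤ ∑ i, (ci i * ‖v‖) * |JV (b i) x| := by
            apply Finset.sum_le_sum
            intro i _
            rw [abs_mul]
            exact mul_le_mul_of_nonneg_right (hcoord i v) (abs_nonneg _)
        _ = ‖v‖ * ∑ i, ci i * |JV (b i) x| := by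
            rw [Finset.mul_sum]
            apply Finset.sum_congr rfl
            intro i _
            ring
  -- Memℒp
  have hmem : ∀ v : V, MemLp (JV v) 2 μ := fun v =>
    (memLp_two_iff_integrable_sq (hJVmeas v).aestronglyMeasurable).2 (hJVint v)
  -- the map into L²
  let T : W →ₗ[ℝ] Lp ℝ 2 μ :=
    { toFun := fun w => MemLp.toLp (JV ↑w) (hmem ↑w)
      map_add' := by
        intro a b
        show MemLp.toLp (JV ↑(a + b)) (hmem ↑(a + b))
          = MemLp.toLp (JV ↑a) (hmem ↑a) + MemLp.toLp (JV ↑b) (hmem ↑b)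
        rw [← MemLp.toLp_add (hmem ↑a) (hmem ↑b)]
        refine MemLp.toLp_congr _ _ (Filter.EventuallyEq.of_eq ?_)
        simp only [Submodule.coe_add, map_add]
      map_smul' := by
        intro c a
        show MemLp.toLp (JV ↑(c • a)) (hmem ↑(c • a)) = c • MemLp.toLp (JV ↑a) (hmem ↑a)
        rw [← MemLp.toLp_const_smul c (hmem ↑a)]
        refine MemLp.toLp_congr _ _ (Filter.EventuallyEq.of_eq ?_)
        simp only [Submodule.coe_smul, LinearMap.map_smul] }
  have hTinj : Function.Injective T := by
    rw [injective_iff_map_eq_zero]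
    intro w hw
    have h0 : JV ↑w =ᵐ[μ] 0 := by
      have : (hmem ↑w).toLp (JV ↑w) = (MemLp.zero : MemLp (0 : α → ℝ) 2 μ).toLp 0 := by
        rw [MemLp.toLp_zero]; exact hw
      exact (MemLp.toLp_eq_toLp_iff _ _).1 this
    have hN : (↑w : V) ∈ N := h0
    have hz : (↑w : V) = 0 := Submodule.disjoint_def.mp hWc.disjoint _ hN w.2
    exact Subtype.ext hz
  have hTnorm : ∀ w : W, ‖T w‖ ^ 2 = ∫ x, (JV ↑w x) ^ 2 ∂μ := by
    intro w
    rw [← real_inner_self_eq_norm_sq]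
    rw [MeasureTheory.L2.inner_def]
    refine integral_congr_ae ?_
    filter_upwards [MemLp.coeFn_toLp (hmem (↑w : V))] with x hx
    have hx' : (T w : α → ℝ) x = JV ↑w x := hx
    rw [RCLike.inner_apply, conj_trivial, hx', sq]
  -- lower bound on W
  obtain ⟨m, hm, hmlow⟩ : ∃ m : ℝ, 0 < m ∧ ∀ w : W, m * ‖w‖ ^ 2 ≤ ∫ x, (JV ↑w x) ^ 2 ∂μ := by
    let e := LinearEquiv.ofInjective T hTinj
    haveI : FiniteDimensional ℝ (LinearMap.range T) := Module.Finite.equiv e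
    let Einv : LinearMap.range T →L[ℝ] W :=
      { toLinearMap := (e.symm : LinearMap.range T →ₗ[ℝ] W)
        cont := (e.symm : LinearMap.range T →ₗ[ℝ] W).continuous_of_finiteDimensional }
    refine ⟨((‖Einv‖ + 1) ^ 2)⁻¹, by positivity, ?_⟩
    intro w
    have h1 : ‖w‖ ≤ (‖Einv‖ + 1) * ‖T w‖ := by
      have he : e.symm (e w) = w := e.symm_apply_apply w
      have h2 : ‖w‖ = ‖Einv (e w)‖ := by
        rw [show (Einv (e w) : W) = e.symm (e w) from rfl, he]
      have h3 : ‖Einv (e w)‖ ≤ ‖Einv‖ * ‖e w‖ := Einv.le_opNorm _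
      have h4 : ‖e w‖ = ‖T w‖ := by
        have : ((e w : LinearMap.range T) : Lp ℝ 2 μ) = T w := rfl
        rw [← this]; rfl
      nlinarith [norm_nonneg (T w), norm_nonneg Einv]
    have h5 : ‖w‖ ^ 2 ≤ (‖Einv‖ + 1) ^ 2 * ‖T w‖ ^ 2 := by
      nlinarith [norm_nonneg w, norm_nonneg (T w), norm_nonneg Einv]
    rw [← hTnorm w]
    rw [inv_mul_le_iff₀ (by positivity)]
    linarith [h5]
  -- tail bound
  obtain ⟨N0, hN0, htail⟩ := tail_vanish' μ hgmeas hgint (ε := m / 2) (by positivity)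
  refine ⟨l / (Cp * N0), by positivity, ?_⟩
  intro u hu hunorm
  simp only [sq_abs]
  by_cases hui : Integrable (fun x => (ι u x) ^ 2) μ
  · -- main case
    set v : V := ⟨u, hu, hui⟩ with hvdef
    set w : W := proj v with hwdef
    have hvnorm : ‖v‖ = ‖u‖ := rfl
    have huv : ι u = JV v := rfl
    have hwnorm : ‖(↑w : V)‖ ≤ Cp * ‖u‖ := by
      rw [← hvnorm]
      exact hprojbound v
    have haeN : JV v =ᵐ[μ] JV ↑w := by
      have hd := hdecomp v
      have hnm : JV ((nmap v : V)) =ᵐ[μ] 0 := (nmap v).2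
      have hsum : JV v = JV ((nmap v : V)) + JV ↑w := by
        rw [← map_add, hd]
      rw [hsum]
      filter_upwards [hnm] with x hx
      simp only [Pi.add_apply, hx, Pi.zero_apply, zero_add]
    have hwint := hJVint (↑w : V)
    have hwmeas := hJVmeas (↑w : V)
    -- rewrite both integrals to use JV w
    have hR : (∫ x, (ι u x) ^ 2 ∂μ) = ∫ x, (JV ↑w x) ^ 2 ∂μ := by
      refine integral_congr_ae ?_
      filter_upwards [haeN] with x hx
      rw [huv, hx]
    have hmeasset1 : MeasurableSet {x | l < |ι u x|} :=
      measurableSet_lt measurable_const (hmeas u).abs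
    have hmeasset2 : MeasurableSet {x | l < |JV ↑w x|} :=
      measurableSet_lt measurable_const hwmeas.abs
    have hL : (∫ x in {x | l < |ι u x|}, (ι u x) ^ 2 ∂μ)
        = ∫ x in {x | l < |JV ↑w x|}, (JV ↑w x) ^ 2 ∂μ := by
      rw [← integral_indicator hmeasset1, ← integral_indicator hmeasset2]
      refine integral_congr_ae ?_
      filter_upwards [haeN] with x hx
      have hxe : ι u x = JV ↑w x := by rw [huv, hx]
      simp only [Set.indicator_apply, Set.mem_setOf_eq, hxe]
    rw [hR, hL]
    by_cases hw0 : w = 0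
    · -- zero case
      rw [hw0]
      simp only [Submodule.coe_zero, map_zero, Pi.zero_apply]
      have hempty : {x : α | l < |(0 : ℝ)|} = ∅ := by
        ext x; simp [not_lt, le_of_lt hl]
      rw [hempty]
      simp
    · have hwpos : 0 < ‖w‖ := norm_pos_iff.2 hw0
      have hwcoe : ‖(↑w : V)‖ = ‖w‖ := rfl
      -- set inclusion
      have hsub : {x | l < |JV ↑w x|} ⊆ {x | N0 < g x} := by
        intro x hx
        simp only [Set.mem_setOf_eq] at hx ⊢
        have h1 : |JV ↑w x| ≤ ‖w‖ * g x := by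
          have := hpt (↑w : V) x
          rwa [hwcoe] at this
        have h2 : l < ‖w‖ * g x := lt_of_lt_of_le hx h1
        have hwl : ‖w‖ * N0 ≤ l := by
          have hb1 : ‖(↑w : V)‖ ≤ Cp * (l / (Cp * N0)) := hwnorm.trans
            (mul_le_mul_of_nonneg_left hunorm (le_of_lt hCppos))
          have hCpN : Cp * (l / (Cp * N0)) = l / N0 := by
            field_simp
          rw [hCpN, hwcoe] at hb1
          exact (le_div_iff₀ hN0).1 hb1
        nlinarith
      have hmeasset3 : MeasurableSet {x | N0 < g x} :=
        measurableSet_lt measurable_const hgmeas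
      have step1 : (∫ x in {x | l < |JV ↑w x|}, (JV ↑w x) ^ 2 ∂μ)
          ≤ ∫ x in {x | N0 < g x}, (JV ↑w x) ^ 2 ∂μ := by
        apply setIntegral_mono_set (hwint.integrableOn)
        · filter_upwards with x using sq_nonneg _
        · exact HasSubset.Subset.eventuallyLE hsub
      have step2 : (∫ x in {x | N0 < g x}, (JV ↑w x) ^ 2 ∂μ)
          ≤ ∫ x in {x | N0 < g x}, ‖w‖ ^ 2 * g x ^ 2 ∂μ := by
        apply setIntegral_mono_on hwint.integrableOn
          ((hgint.const_mul _).integrableOn) hmeasset3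
        intro x _
        have h1 : |JV ↑w x| ≤ ‖w‖ * g x := by
          have := hpt (↑w : V) x
          rwa [hwcoe] at this
        have h2 := sq_abs (JV ↑w x)
        nlinarith [abs_nonneg (JV ↑w x), hgnonneg x, norm_nonneg w]
      have step3 : (∫ x in {x | N0 < g x}, ‖w‖ ^ 2 * g x ^ 2 ∂μ)
          ≤ ‖w‖ ^ 2 * (m / 2) := by
        rw [integral_const_mul]
        exact mul_le_mul_of_nonneg_left htail (sq_nonneg _)
      have step4 : m * ‖w‖ ^ 2 ≤ ∫ x, (JV ↑w x) ^ 2 ∂μ := hmlow w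
      calc (∫ x in {x | l < |JV ↑w x|}, (JV ↑w x) ^ 2 ∂μ)
          ≤ ‖w‖ ^ 2 * (m / 2) := (step1.trans step2).trans step3
        _ = (1 / 2) * (m * ‖w‖ ^ 2) := by ring
        _ ≤ (1 / 2) * ∫ x, (JV ↑w x) ^ 2 ∂μ := by linarith [step4]
  · -- non-integrable case: both integrals are junk
    have hRHS : 0 ≤ ∫ x, (ι u x) ^ 2 ∂μ := integral_nonneg fun x => sq_nonneg _
    have hmeasset1 : MeasurableSet {x | l < |ι u x|} :=
      measurableSet_lt measurable_const (hmeas u).abs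
    have hLHS : (∫ x in {x | l < |ι u x|}, (ι u x) ^ 2 ∂μ) = 0 := by
      apply integral_undef
      intro hon
      apply hui
      have hon2 : IntegrableOn (fun x => (ι u x) ^ 2) {x | l < |ι u x|}ᶜ μ := by
        refine Integrable.mono' (integrable_const (l ^ 2)) ?_ ?_
        · exact ((hmeas u).pow_const 2).aestronglyMeasurable.restrict
        · rw [ae_restrict_iff' hmeasset1.compl]
          filter_upwards with x hx
          simp only [Set.mem_compl_iff, Set.mem_setOf_eq, not_lt] at hx
          rw [Real.norm_eq_abs, abs_of_nonneg (sq_nonneg _), ← sq_abs]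
          exact pow_le_pow_left₀ (abs_nonneg _) hx 2
      have huniv := MeasureTheory.IntegrableOn.union hon hon2
      rwa [Set.union_compl_self, integrableOn_univ] at huniv
    rw [hLHS]
    linarith
end

section
/- Let (a_n) be a sequence of positive reals, η > 1, and suppose a_{n+1} ≤ M^{q/τ_n} (τ_n/q)^{q/τ_n} a_n for all n, where τ_n = q η^n, q > 0, M ≥ 1. Then a_n ≤ M^{η/(η−1)} · η^{η/(η−1)²} · a_0 for all n. -/
theorem stmt_16 (a : ℕ → ℝ) (ha : ∀ n, 0 < a n) (η q M : ℝ)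
    (hη : 1 < η) (hq : 0 < q) (hM : 1 ≤ M)
    (h : ∀ n : ℕ, a (n + 1) ≤
      M ^ (q / (q * η ^ n)) * ((q * η ^ n) / q) ^ (q / (q * η ^ n)) * a n) :
    ∀ n : ℕ, a n ≤ M ^ (η / (η - 1)) * η ^ (η / (η - 1) ^ 2) * a 0 := by
  have hη0 : 0 < η := lt_trans one_pos hη
  have hM0 : 0 < M := lt_of_lt_of_le one_pos hM
  set r : ℝ := 1 / η with hr
  have hr0 : 0 ≤ r := by positivity
  have hr1 : r < 1 := by
    rw [hr, div_lt_one hη0]; exact hη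
  -- simplify hypothesis
  have h' : ∀ n : ℕ, a (n + 1) ≤ M ^ (r ^ n) * η ^ ((n : ℝ) * r ^ n) * a n := by
    intro n
    have hηn : (0 : ℝ) < η ^ n := pow_pos hη0 n
    have e1 : q / (q * η ^ n) = r ^ n := by
      rw [hr, div_pow, one_pow]
      field_simp
    have e2 : (q * η ^ n) / q = η ^ n := by field_simp
    have e3 : ((η : ℝ) ^ n) ^ (r ^ n) = η ^ ((n : ℝ) * r ^ n) := by
      rw [← Real.rpow_natCast η n, ← Real.rpow_mul hη0.le]
    have := h n
    rwa [e1, e2, e3] at this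
  -- induction bound with partial sums
  have key : ∀ n : ℕ, a n ≤
      M ^ (∑ i ∈ Finset.range n, r ^ i) *
      η ^ (∑ i ∈ Finset.range n, (i : ℝ) * r ^ i) * a 0 := by
    intro n
    induction n with
    | zero => simp
    | succ n ih =>
      calc a (n + 1) ≤ M ^ (r ^ n) * η ^ ((n : ℝ) * r ^ n) * a n := h' n
        _ ≤ M ^ (r ^ n) * η ^ ((n : ℝ) * r ^ n) *
            (M ^ (∑ i ∈ Finset.range n, r ^ i) *
             η ^ (∑ i ∈ Finset.range n, (i : ℝ) * r ^ i) * a 0) := by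
            apply mul_le_mul_of_nonneg_left ih
            positivity
        _ = M ^ (∑ i ∈ Finset.range (n+1), r ^ i) *
            η ^ (∑ i ∈ Finset.range (n+1), (i : ℝ) * r ^ i) * a 0 := by
            rw [Finset.sum_range_succ, Finset.sum_range_succ,
              Real.rpow_add hM0, Real.rpow_add hη0]
            ring
  intro n
  refine le_trans (key n) ?_
  have hnorm : ‖r‖ < 1 := by rw [Real.norm_eq_abs, abs_of_nonneg hr0]; exact hr1
  have hsub : (0:ℝ) < η - 1 := by linarith
  -- bound first sum
  have hs1 : (∑ i ∈ Finset.range n, r ^ i) ≤ η / (η - 1) := by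
    have hsum : HasSum (fun i : ℕ => r ^ i) (1 - r)⁻¹ := hasSum_geometric_of_lt_one hr0 hr1
    have hle := sum_le_hasSum (Finset.range n) (fun i _ => by positivity) hsum
    have : (1 - r)⁻¹ = η / (η - 1) := by
      rw [hr]; field_simp
    linarith [hle, this ▸ hle]
  have hs2 : (∑ i ∈ Finset.range n, (i : ℝ) * r ^ i) ≤ η / (η - 1) ^ 2 := by
    have hsum : HasSum (fun i : ℕ => (i : ℝ) * r ^ i) (r / (1 - r) ^ 2) :=
      hasSum_coe_mul_geometric_of_norm_lt_one hnorm
    have hle := sum_le_hasSum (Finset.range n) (fun i _ => by positivity) hsum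
    have heq : r / (1 - r) ^ 2 = η / (η - 1) ^ 2 := by
      rw [hr]; field_simp
    linarith [heq ▸ hle]
  have b1 : M ^ (∑ i ∈ Finset.range n, r ^ i) ≤ M ^ (η / (η - 1)) :=
    Real.rpow_le_rpow_of_exponent_le hM hs1
  have b2 : η ^ (∑ i ∈ Finset.range n, (i : ℝ) * r ^ i) ≤ η ^ (η / (η - 1) ^ 2) :=
    Real.rpow_le_rpow_of_exponent_le hη.le hs2
  have ha0 := (ha 0).le
  apply mul_le_mul _ le_rfl ha0 (by positivity)
  exact mul_le_mul b1 b2 (by positivity) (by positivity)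
end
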